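/- Assume all diagonal entries rᵢ of R are nonzero, p ≠ 0, and ξ ∈ ℝⁿ satisfies ξᵀL = 0 (ξ is a left null vector of L). Define η̂₁ = (R⁻¹ξ; −τξ; τκ₂(1/p + 1/p²)·ξ), η̂₂ = (0ₙ; τξ; −(τκ₂/p)·ξ), and η̂₃ = (0ₙ; 0ₙ; ξ) in ℝ^{3n}. Then η̂₂ᵀA = η̂₂ᵀ, η̂₁ᵀA = η̂₁ᵀ + η̂₂ᵀ, and η̂₃ᵀA = (1−p)·η̂₃ᵀ; i.e., (η̂₂, η̂₁) is a left Jordan chain of A for the eigenvalue 1 and η̂₃ is a left eigenvector of A for the eigenvalue 1−p. -/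

import Mathlib

open Matrix Polynomial

/-- The 3n×3n transition matrix of the skewless clock-synchronization algorithm. -/
noncomputable def Amat (n : ℕ) (τ κ₁ κ₂ p : ℝ) (L R : Matrix (Fin n) (Fin n) ℝ) :
    Matrix (Fin n ⊕ Fin n ⊕ Fin n) (Fin n ⊕ Fin n ⊕ Fin n) ℝ :=
  Matrix.fromBlocks 1 (Matrix.fromCols (τ • R) 0)
    (Matrix.fromRows ((-κ₁) • L) ((-p) • L))
    (Matrix.fromBlocks 1 ((-κ₂) • (1 : Matrix (Fin n) (Fin n) ℝ)) 0
      ((1 - p) • (1 : Matrix (Fin n) (Fin n) ℝ)))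

/-- Left Jordan chain of `A` for the eigenvalue `1` and left eigenvector for `1 − p`
(left-eigenvector part of Lemma 2 of the paper): with `ξᵀL = 0`,
`η̂₂ᵀA = η̂₂ᵀ`, `η̂₁ᵀA = η̂₁ᵀ + η̂₂ᵀ`, `η̂₃ᵀA = (1−p)η̂₃ᵀ` where
`η̂₁ = (R⁻¹ξ; −τξ; τκ₂(1/p+1/p²)ξ)`, `η̂₂ = (0; τξ; −(τκ₂/p)ξ)`, `η̂₃ = (0; 0; ξ)`. -/
theorem stmt4 (n : ℕ) (hn : 1 ≤ n) (τ κ₁ κ₂ p : ℝ) (hp : p ≠ 0)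
    (L : Matrix (Fin n) (Fin n) ℝ) (r : Fin n → ℝ) (hr : ∀ i, r i ≠ 0)
    (R : Matrix (Fin n) (Fin n) ℝ) (hR : R = Matrix.diagonal r)
    (ξ : Fin n → ℝ) (hξ : ξ ᵥ* L = 0)
    (η₁ η₂ η₃ : (Fin n ⊕ Fin n ⊕ Fin n) → ℝ)
    (hη₁ : η₁ = Sum.elim (fun i => (r i)⁻¹ * ξ i)
      (Sum.elim (fun i => -τ * ξ i) (fun i => τ * κ₂ * (1 / p + 1 / p ^ 2) * ξ i)))
    (hη₂ : η₂ = Sum.elim (fun _ => 0)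
      (Sum.elim (fun i => τ * ξ i) (fun i => -(τ * κ₂ / p) * ξ i)))
    (hη₃ : η₃ = Sum.elim (fun _ => 0) (Sum.elim (fun _ => 0) (fun i => ξ i))) :
    η₂ ᵥ* (Amat n τ κ₁ κ₂ p L R) = η₂ ∧
    η₁ ᵥ* (Amat n τ κ₁ κ₂ p L R) = η₁ + η₂ ∧
    η₃ ᵥ* (Amat n τ κ₁ κ₂ p L R) = (1 - p) • η₃ := by
  have hS : ∀ j, ∑ i, ξ i * L i j = 0 := by
    intro j
    simpa [Matrix.vecMul, dotProduct] using congrFun hξ j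
  have hK : ∀ (a b : ℝ) (j : Fin n), ∑ x, a * ξ x * (b * L x j) = 0 := by
    intro a b j
    have h1 : ∀ x, a * ξ x * (b * L x j) = (a * b) * (ξ x * L x j) := fun x => by ring
    simp only [h1, ← Finset.mul_sum, hS, mul_zero]
  have hK1 : ∀ (b : ℝ) (j : Fin n), ∑ x, ξ x * (b * L x j) = 0 := by
    intro b j
    have h1 : ∀ x, ξ x * (b * L x j) = b * (ξ x * L x j) := fun x => by ring
    simp only [h1, ← Finset.mul_sum, hS, mul_zero]
  subst hη₁ hη₂ hη₃ hR
  refine ⟨?_, ?_, ?_⟩ <;> funext j <;> rcases j with j | j | j <;>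
    simp [Amat, Matrix.vecMul, dotProduct, Matrix.fromBlocks, Matrix.fromCols,
      Matrix.fromRows_apply_inl, Matrix.fromRows_apply_inr, Fintype.sum_sum_type, Matrix.diagonal, Matrix.one_apply,
      Finset.sum_ite_eq', mul_ite, Finset.mul_sum, Finset.sum_add_distrib, hK, hK1] <;>
    (try field_simp [hr j]) <;> (try ring)
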